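/- Fix constants C₁, C'₁ > 0, an integer q̄ ≥ 1, T > 0, and σ, η, k > 0. Let B be the (2q̄+1)×(2q̄+1) tridiagonal matrix indexed by q ∈ {−q̄,…,q̄} with B_{q,q} = −C₁ q², B_{q,q±1} = C'₁ and zeros elsewhere, set u(t,q) := (e^{(T−t)B}·𝟏)_q and v(t,q) := −u(t,q)^{−ση/k}. Then for all t ∈ [0,T] and all q ∈ {−q̄,…,q̄−1}: (1/η)·| log( v(t,q) / v(t,q+1) ) | ≤ (σ/k)·(2C'₁ + C₁ q̄²)·T. -/

import Mathlib

open Matrix NormedSpace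

lemma sum_ite_val_le {n : ℕ} (p : ℕ → Prop) [DecidablePred p]
    (hp : ∀ x y, p x → p y → x = y) {c : ℝ} (hc : 0 ≤ c) :
    ∑ j : Fin n, (if p (j : ℕ) then c else 0) ≤ c := by
  classical
  rw [← Finset.sum_filter, Finset.sum_const, nsmul_eq_mul]
  have hcard : (Finset.univ.filter (fun j : Fin n => p (j : ℕ))).card ≤ 1 := by
    refine Finset.card_le_one.2 fun a ha b hb => ?_
    simp only [Finset.mem_filter] at ha hb
    exact Fin.val_injective (hp _ _ ha.2 hb.2)
  calc ((Finset.univ.filter (fun j : Fin n => p (j : ℕ))).card : ℝ) * c ≤ 1 * c := by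
        exact mul_le_mul_of_nonneg_right (by exact_mod_cast hcard) hc
    _ = c := one_mul c

lemma exp_mulVec_one_bounds {n : ℕ} (M : Matrix (Fin n) (Fin n) ℝ)
    (hM : ∀ i j, 0 ≤ M i j) {r : ℝ} (hr0 : 0 ≤ r)
    (hr : ∀ i, ∑ j, M i j ≤ r) (i : Fin n) :
    1 ≤ (exp M *ᵥ (fun _ => 1)) i ∧ (exp M *ᵥ (fun _ => 1)) i ≤ Real.exp r := by
  letI : SeminormedRing (Matrix (Fin n) (Fin n) ℝ) := Matrix.linftyOpSemiNormedRing
  letI : NormedRing (Matrix (Fin n) (Fin n) ℝ) := Matrix.linftyOpNormedRing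
  letI : NormedAlgebra ℝ (Matrix (Fin n) (Fin n) ℝ) := Matrix.linftyOpNormedAlgebra
  have key : ∀ m : ℕ, ∀ j, 0 ≤ (M ^ m *ᵥ (fun _ => 1)) j ∧ (M ^ m *ᵥ (fun _ => 1)) j ≤ r ^ m := by
    intro m
    induction m with
    | zero => intro j; simp [Matrix.one_mulVec]
    | succ m ih =>
      intro j
      have hrw : (M ^ (m + 1) *ᵥ (fun _ => 1)) j = ∑ l, M j l * (M ^ m *ᵥ (fun _ => 1)) l := by
        rw [pow_succ', ← Matrix.mulVec_mulVec]
        rfl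
      rw [hrw]
      constructor
      · exact Finset.sum_nonneg fun l _ => mul_nonneg (hM j l) (ih l).1
      · calc ∑ l, M j l * (M ^ m *ᵥ (fun _ => 1)) l
            ≤ ∑ l, M j l * r ^ m :=
              Finset.sum_le_sum fun l _ => mul_le_mul_of_nonneg_left (ih l).2 (hM j l)
          _ = (∑ l, M j l) * r ^ m := by rw [Finset.sum_mul]
          _ ≤ r * r ^ m := mul_le_mul_of_nonneg_right (hr j) (pow_nonneg hr0 m)
          _ = r ^ (m + 1) := (pow_succ' r m).symm
  have hsummable : Summable fun m : ℕ => ((m.factorial : ℝ)⁻¹) • M ^ m := expSeries_summable' (𝕂 := ℝ) M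
  let φ : Matrix (Fin n) (Fin n) ℝ →ₗ[ℝ] ℝ :=
    { toFun := fun A => (A *ᵥ (fun _ => 1)) i
      map_add' := fun A B => by simp [Matrix.add_mulVec]
      map_smul' := fun c A => by simp [Matrix.smul_mulVec] }
  have hφc : Continuous φ := φ.continuous_of_finiteDimensional
  let φL : Matrix (Fin n) (Fin n) ℝ →L[ℝ] ℝ := ⟨φ, hφc⟩
  have hrepr : (exp M *ᵥ (fun _ => 1)) i
      = ∑' m : ℕ, ((m.factorial : ℝ)⁻¹) * ((M ^ m *ᵥ (fun _ => 1)) i) := by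
    calc (exp M *ᵥ (fun _ => 1)) i = φL (exp M) := rfl
      _ = φL (∑' m : ℕ, ((m.factorial : ℝ)⁻¹) • M ^ m) := by rw [exp_eq_tsum ℝ]
      _ = ∑' m : ℕ, φL (((m.factorial : ℝ)⁻¹) • M ^ m) := φL.map_tsum hsummable
      _ = ∑' m : ℕ, ((m.factorial : ℝ)⁻¹) * ((M ^ m *ᵥ (fun _ => 1)) i) := by
          refine tsum_congr fun m => ?_
          simp [φL, φ, Matrix.smul_mulVec]
  set g : ℕ → ℝ := fun m => ((m.factorial : ℝ)⁻¹) * ((M ^ m *ᵥ (fun _ => 1)) i) with hg_def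
  have hg_nonneg : ∀ m, 0 ≤ g m := fun m =>
    mul_nonneg (inv_nonneg.2 (Nat.cast_nonneg _)) (key m i).1
  have hg_le : ∀ m, g m ≤ r ^ m / m.factorial := by
    intro m
    rw [div_eq_mul_inv, mul_comm]
    exact mul_le_mul_of_nonneg_left (key m i).2 (inv_nonneg.2 (Nat.cast_nonneg _))
  have hgs : Summable g :=
    Summable.of_nonneg_of_le hg_nonneg hg_le (Real.summable_pow_div_factorial r)
  have hr_exp : Real.exp r = ∑' m : ℕ, r ^ m / m.factorial := by
    rw [Real.exp_eq_exp_ℝ, exp_eq_tsum_div]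
  constructor
  · rw [hrepr]
    have h0 : g 0 = 1 := by simp [hg_def, Matrix.one_mulVec]
    calc (1 : ℝ) = g 0 := h0.symm
      _ ≤ ∑' m, g m := hgs.le_tsum 0 fun m _ => hg_nonneg m
  · rw [hrepr, hr_exp]
    exact Summable.tsum_le_tsum hg_le hgs (Real.summable_pow_div_factorial r)

set_option maxHeartbeats 2000000 in
/-- Proposition 4.1, second assertion: with `u(t,q) = (e^{(T−t)B}𝟏)_q` and
`v = −u^{−ση/k}`, the logarithmic increments of `v` satisfy
`(1/η)·|log(v(t,q)/v(t,q+1))| ≤ (σ/k)·(2C'₁ + C₁q̄²)·T`. -/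
theorem statement8 (C₁ C₁' T σ η k : ℝ)
    (hC₁ : 0 < C₁) (hC₁' : 0 < C₁') (hT : 0 < T)
    (hσ : 0 < σ) (hη : 0 < η) (hk : 0 < k)
    (qbar : ℕ) (hqbar : 1 ≤ qbar) :
    letI B : Matrix (Fin (2 * qbar + 1)) (Fin (2 * qbar + 1)) ℝ := fun i j =>
      if i = j then -C₁ * (((i : ℕ) : ℝ) - (qbar : ℝ)) ^ 2
      else if (i : ℕ) + 1 = (j : ℕ) ∨ (j : ℕ) + 1 = (i : ℕ) then C₁' else 0
    letI u : ℝ → Fin (2 * qbar + 1) → ℝ := fun t =>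
      (NormedSpace.exp ((T - t) • B)) *ᵥ (fun _ => 1)
    letI v : ℝ → Fin (2 * qbar + 1) → ℝ := fun t i => -(u t i) ^ (-(σ * η / k))
    ∀ t ∈ Set.Icc (0 : ℝ) T, ∀ i j : Fin (2 * qbar + 1), (i : ℕ) + 1 = (j : ℕ) →
      (1 / η) * |Real.log (v t i / v t j)|
        ≤ (σ / k) * (2 * C₁' + C₁ * (qbar : ℝ) ^ 2) * T := by
  intro t ht i j hij
  obtain ⟨ht0, htT⟩ := ht
  beta_reduce
  set B : Matrix (Fin (2 * qbar + 1)) (Fin (2 * qbar + 1)) ℝ := fun i j =>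
      if i = j then -C₁ * (((i : ℕ) : ℝ) - (qbar : ℝ)) ^ 2
      else if (i : ℕ) + 1 = (j : ℕ) ∨ (j : ℕ) + 1 = (i : ℕ) then C₁' else 0 with hB_def
  set uu : Fin (2 * qbar + 1) → ℝ :=
    NormedSpace.exp ((T - t) • B) *ᵥ (fun _ => 1) with huu_def
  set s : ℝ := T - t with hs_def
  have hs0 : 0 ≤ s := by simp [hs_def]; linarith
  have hsT : s ≤ T := by simp [hs_def]; linarith
  set c : ℝ := C₁ * (qbar : ℝ) ^ 2 with hc_def
  have hc0 : 0 ≤ c := by positivity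
  set M : Matrix (Fin (2 * qbar + 1)) (Fin (2 * qbar + 1)) ℝ :=
    s • B + (s * c) • (1 : Matrix _ _ ℝ) with hM_def
  clear_value B uu s c M
  have hMd : ∀ a, M a a = s * B a a + s * c := by
    intro a
    simp [hM_def, Matrix.add_apply, Matrix.smul_apply, Matrix.one_apply_eq, smul_eq_mul]
  have hMo : ∀ a b, a ≠ b → M a b = s * B a b := by
    intro a b h
    simp [hM_def, Matrix.add_apply, Matrix.smul_apply, Matrix.one_apply_ne h, smul_eq_mul]
  -- entrywise nonnegativity of M
  have hMnn : ∀ a b, 0 ≤ M a b := by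
    intro a b
    by_cases hab : a = b
    · subst hab
      rw [hMd a]
      have hB : B a a = -C₁ * (((a : ℕ) : ℝ) - (qbar : ℝ)) ^ 2 := by simp [hB_def]
      have ha2 : ((a : ℕ) : ℝ) ≤ 2 * (qbar : ℝ) := by
        have := a.isLt
        have : (a : ℕ) ≤ 2 * qbar := by omega
        exact_mod_cast this
      have ha0 : (0 : ℝ) ≤ ((a : ℕ) : ℝ) := Nat.cast_nonneg _
      have hsq : (((a : ℕ) : ℝ) - (qbar : ℝ)) ^ 2 ≤ ((qbar : ℝ)) ^ 2 :=
        sq_le_sq' (by linarith) (by linarith)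
      rw [hB]
      have : 0 ≤ s * (c - C₁ * (((a : ℕ) : ℝ) - (qbar : ℝ)) ^ 2) := by
        apply mul_nonneg hs0
        rw [hc_def]
        nlinarith
      nlinarith
    · have hB : B a b = if (a : ℕ) + 1 = (b : ℕ) ∨ (b : ℕ) + 1 = (a : ℕ) then C₁' else 0 := by
        simp [hB_def, hab]
      rw [hMo a b hab, hB]
      split_ifs <;> [positivity; simp]
  -- row sums of M
  have hMrow : ∀ a, ∑ b, M a b ≤ s * (c + 2 * C₁') := by
    intro a
    have hpt : ∀ b, M a b ≤ s * c * (if a = b then 1 else 0)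
        + s * ((if (b : ℕ) = (a : ℕ) + 1 then C₁' else 0)
          + (if (b : ℕ) + 1 = (a : ℕ) then C₁' else 0)) := by
      intro b
      by_cases hab : a = b
      · subst hab
        have hB : B a a = -C₁ * (((a : ℕ) : ℝ) - (qbar : ℝ)) ^ 2 := by simp [hB_def]
        rw [hMd a, hB]
        have h1 : ¬ ((a : ℕ) = (a : ℕ) + 1) := by omega
        have h2 : ¬ ((a : ℕ) + 1 = (a : ℕ)) := by omega
        rw [if_pos rfl, if_neg h1, if_neg h2]
        nlinarith [mul_nonneg hs0 (mul_nonneg hC₁.le (sq_nonneg (((a : ℕ) : ℝ) - (qbar : ℝ))))]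
      · have hB : B a b = if (a : ℕ) + 1 = (b : ℕ) ∨ (b : ℕ) + 1 = (a : ℕ) then C₁' else 0 := by
          simp [hB_def, hab]
        rw [hMo a b hab, hB]
        rw [if_neg hab, mul_zero, zero_add]
        rcases Classical.em ((a : ℕ) + 1 = (b : ℕ)) with h1 | h1
        · have h1' : (b : ℕ) = (a : ℕ) + 1 := h1.symm
          simp only [if_pos (Or.inl h1), if_pos h1']
          split_ifs with h2
          · nlinarith
          · nlinarith
        · rcases Classical.em ((b : ℕ) + 1 = (a : ℕ)) with h2 | h2
          · have h1'' : ¬ ((b : ℕ) = (a : ℕ) + 1) := by omega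
            simp only [if_pos (Or.inr h2), if_neg h1'', if_pos h2, zero_add]
            linarith
          · have h1'' : ¬ ((b : ℕ) = (a : ℕ) + 1) := by omega
            simp only [if_neg (by tauto : ¬((a : ℕ) + 1 = (b : ℕ) ∨ (b : ℕ) + 1 = (a : ℕ))),
              if_neg h1'', if_neg h2, mul_zero, add_zero, le_refl]
    calc ∑ b, M a b
        ≤ ∑ b, (s * c * (if a = b then 1 else 0)
            + s * ((if (b : ℕ) = (a : ℕ) + 1 then C₁' else 0)
              + (if (b : ℕ) + 1 = (a : ℕ) then C₁' else 0))) :=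
          Finset.sum_le_sum fun b _ => hpt b
      _ = s * c * (∑ b, (if a = b then (1:ℝ) else 0))
            + s * ((∑ b : Fin (2 * qbar + 1), (if (b : ℕ) = (a : ℕ) + 1 then C₁' else 0))
              + (∑ b : Fin (2 * qbar + 1), (if (b : ℕ) + 1 = (a : ℕ) then C₁' else 0))) := by
          rw [Finset.sum_add_distrib, ← Finset.mul_sum, ← Finset.mul_sum,
            Finset.sum_add_distrib]
      _ ≤ s * c * 1 + s * (C₁' + C₁') := by
          have e1 : (∑ b : Fin (2 * qbar + 1), (if a = b then (1:ℝ) else 0)) = 1 := by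
            simp [Finset.sum_ite_eq]
          rw [e1]
          have e2 : (∑ b : Fin (2 * qbar + 1), (if (b : ℕ) = (a : ℕ) + 1 then C₁' else 0)) ≤ C₁' :=
            sum_ite_val_le (fun x => x = (a : ℕ) + 1) (fun x y hx hy => hx.trans hy.symm)
              hC₁'.le
          have e3 : (∑ b : Fin (2 * qbar + 1), (if (b : ℕ) + 1 = (a : ℕ) then C₁' else 0)) ≤ C₁' :=
            sum_ite_val_le (fun x => x + 1 = (a : ℕ)) (fun x y hx hy => by omega) hC₁'.le
          have := add_le_add e2 e3
          nlinarith
      _ = s * (c + 2 * C₁') := by ring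
  -- rewrite s • B via M
  have hsplit : s • B = M + (-(s * c)) • (1 : Matrix _ _ ℝ) := by
    rw [hM_def]
    module
  have hcomm : Commute M ((-(s * c)) • (1 : Matrix (Fin (2*qbar+1)) (Fin (2*qbar+1)) ℝ)) :=
    (Commute.one_right M).smul_right _
  have hexp_scalar : NormedSpace.exp ((-(s * c)) • (1 : Matrix (Fin (2*qbar+1)) (Fin (2*qbar+1)) ℝ))
      = Real.exp (-(s * c)) • (1 : Matrix (Fin (2*qbar+1)) (Fin (2*qbar+1)) ℝ) := by
    letI : SeminormedRing (Matrix (Fin (2*qbar+1)) (Fin (2*qbar+1)) ℝ) :=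
      Matrix.linftyOpSemiNormedRing
    letI : NormedRing (Matrix (Fin (2*qbar+1)) (Fin (2*qbar+1)) ℝ) := Matrix.linftyOpNormedRing
    letI : NormedAlgebra ℝ (Matrix (Fin (2*qbar+1)) (Fin (2*qbar+1)) ℝ) :=
      Matrix.linftyOpNormedAlgebra
    have h := algebraMap_exp_comm (𝔸 := Matrix (Fin (2*qbar+1)) (Fin (2*qbar+1)) ℝ) (-(s * c))
    rw [← Real.exp_eq_exp_ℝ, Algebra.algebraMap_eq_smul_one] at h
    rw [← Algebra.algebraMap_eq_smul_one]
    exact h.symm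
  have hexp : NormedSpace.exp (s • B)
      = Real.exp (-(s * c)) • NormedSpace.exp M := by
    rw [hsplit, Matrix.exp_add_of_commute _ _ hcomm, hexp_scalar, mul_smul_comm, mul_one]
  -- bounds on u
  set w : Fin (2 * qbar + 1) → ℝ := NormedSpace.exp M *ᵥ (fun _ => 1) with hw_def
  clear_value w
  have hw := fun a => exp_mulVec_one_bounds M hMnn
    (mul_nonneg hs0 (by linarith : (0:ℝ) ≤ c + 2 * C₁')) hMrow a
  simp only [← hw_def] at hw
  have hu_eq : ∀ a, uu a = Real.exp (-(s * c)) * w a := by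
    intro a
    rw [huu_def, hexp, Matrix.smul_mulVec, hw_def]
    simp
  have hu_pos : ∀ a, 0 < uu a := by
    intro a
    rw [hu_eq a]
    exact mul_pos (Real.exp_pos _) (lt_of_lt_of_le one_pos (hw a).1)
  have hlog : ∀ a, -(s * c) ≤ Real.log (uu a) ∧ Real.log (uu a) ≤ 2 * C₁' * s := by
    intro a
    constructor
    · have hle : Real.exp (-(s * c)) ≤ uu a := by
        rw [hu_eq a]
        nlinarith [(hw a).1, Real.exp_pos (-(s * c))]
      have := (Real.log_le_log_iff (Real.exp_pos _) (hu_pos a)).2 hle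
      rwa [Real.log_exp] at this
    · have hle : uu a ≤ Real.exp (2 * C₁' * s) := by
        rw [hu_eq a]
        have : Real.exp (-(s*c)) * w a ≤ Real.exp (-(s*c)) * Real.exp (s * (c + 2 * C₁')) :=
          mul_le_mul_of_nonneg_left (hw a).2 (Real.exp_pos _).le
        calc Real.exp (-(s*c)) * w a ≤ Real.exp (-(s*c)) * Real.exp (s * (c + 2 * C₁')) := this
          _ = Real.exp (-(s*c) + s * (c + 2 * C₁')) := (Real.exp_add _ _).symm
          _ = Real.exp (2 * C₁' * s) := by ring_nf
      have := (Real.log_le_log_iff (hu_pos a) (Real.exp_pos _)).2 hle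
      rwa [Real.log_exp] at this
  -- final computation
  set α : ℝ := σ * η / k with hα_def
  have hα0 : 0 < α := by rw [hα_def]; positivity
  clear_value α
  have hv_ratio : (-(uu i) ^ (-α)) / (-(uu j) ^ (-α)) = (uu i) ^ (-α) / (uu j) ^ (-α) :=
    neg_div_neg_eq _ _
  have hlogr : Real.log ((-(uu i) ^ (-α)) / (-(uu j) ^ (-α)))
      = α * (Real.log (uu j) - Real.log (uu i)) := by
    rw [hv_ratio, Real.log_div (ne_of_gt (Real.rpow_pos_of_pos (hu_pos i) _))
      (ne_of_gt (Real.rpow_pos_of_pos (hu_pos j) _)),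
      Real.log_rpow (hu_pos i), Real.log_rpow (hu_pos j)]
    ring
  have habs : |Real.log (uu j) - Real.log (uu i)| ≤ (2 * C₁' + c) * s := by
    have hi' := hlog i
    have hj' := hlog j
    rw [abs_le]
    constructor <;> linarith [hi'.1, hi'.2, hj'.1, hj'.2]
  have hfinal : (1 / η) * |Real.log ((-(uu i) ^ (-α)) / (-(uu j) ^ (-α)))|
      ≤ (σ / k) * ((2 * C₁' + c) * s) := by
    rw [hlogr, abs_mul, abs_of_pos hα0]
    have : (1 / η) * (α * |Real.log (uu j) - Real.log (uu i)|)
        = (σ / k) * |Real.log (uu j) - Real.log (uu i)| := by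
      rw [hα_def]; field_simp
    rw [this]
    exact mul_le_mul_of_nonneg_left habs (by positivity)
  have h1 : (σ / k) * ((2 * C₁' + c) * s) ≤ (σ / k) * ((2 * C₁' + c) * T) :=
    mul_le_mul_of_nonneg_left (mul_le_mul_of_nonneg_left hsT (by linarith))
      (div_pos hσ hk).le
  rw [hc_def] at hfinal h1 ⊢
  linarith
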